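/- Let E be a cominuscule representation of a simple complex Lie algebra g with highest weight ϖ, and let α₁, ..., α_r be strongly orthogonal long roots whose root spaces lie in the abelian nilradical u_-. Choose nonzero y_{α_i} ∈ g_{-α_i} and set y = y_{α₁} + ... + y_{α_r}, with φ(y) : E → E the corresponding operator. Then φ(y)^{r+1} = 0 and φ(y)^r maps the highest weight space E_ϖ onto the weight space E_{ϖ - α₁ - ... - α_r}; in particular φ(y)^r(E_ϖ) ≠ 0. -/

import Mathlib

/-- The weight space of `χ : t → ℂ` in a `g`-module `E`. -/
noncomputable def wtSpace (g : Type*) [LieRing g] [LieAlgebra ℂ g]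
    (t : LieSubalgebra ℂ g)
    (E : Type*) [AddCommGroup E] [Module ℂ E] [LieRingModule g E] [LieModule ℂ g E]
    (χ : Module.Dual ℂ t) : Submodule ℂ E :=
  ⨅ H : t, Module.End.eigenspace (LieModule.toEnd ℂ g E (H : g)) (χ H)

open Finset in
theorem aux_sum_pow_card_succ {R ι : Type*} [Ring R] (s : Finset ι) (a : ι → R)
    (hsq : ∀ i ∈ s, a i * a i = 0)
    (hc : (s : Set ι).Pairwise (Function.onFun Commute a)) :
    (∑ i ∈ s, a i) ^ (s.card + 1) = 0 := by
  induction s using Finset.cons_induction with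
  | empty => simp
  | cons i s his ih =>
    have hC : Commute (a i) (∑ j ∈ s, a j) :=
      Commute.sum_right _ _ _ (fun j hj => hc (by simp) (by simp [hj])
        (by rintro rfl; exact his hj))
    have hS : (∑ j ∈ s, a j) ^ (s.card + 1) = 0 :=
      ih (fun j hj => hsq j (by simp [hj])) (hc.mono (fun x hx => by
        simp only [Finset.coe_cons, Set.mem_insert_iff]; exact Or.inr hx))
    rw [Finset.sum_cons, Finset.card_cons, hC.add_pow]
    apply Finset.sum_eq_zero
    intro k hk
    match k with
    | 0 => simp [pow_succ (∑ j ∈ s, a j) (s.card + 1), hS]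
    | 1 =>
      have : s.card + 1 + 1 - 1 = s.card + 1 := by omega
      simp [this, hS]
    | (k+2) =>
      have : a i ^ (k + 2) = 0 := by
        have h2 : a i ^ 2 = 0 := by rw [sq]; exact hsq i (by simp)
        rw [show k + 2 = 2 + k by omega, pow_add, h2, zero_mul]
      simp [this]

open Finset in
theorem aux_sum_pow_card {R ι : Type*} [Ring R] (s : Finset ι) (a : ι → R)
    (hsq : ∀ i ∈ s, a i * a i = 0)
    (hc : (s : Set ι).Pairwise (Function.onFun Commute a)) :
    (∑ i ∈ s, a i) ^ s.card = s.card.factorial • s.noncommProd a hc := by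
  induction s using Finset.cons_induction with
  | empty => simp
  | cons i s his ih =>
    have hC : Commute (a i) (∑ j ∈ s, a j) :=
      Commute.sum_right _ _ _ (fun j hj => hc (by simp) (by simp [hj])
        (by rintro rfl; exact his hj))
    have hc' : (s : Set ι).Pairwise (Function.onFun Commute a) :=
      hc.mono (fun x hx => by
        simp only [Finset.coe_cons, Set.mem_insert_iff]; exact Or.inr hx)
    have hS : (∑ j ∈ s, a j) ^ (s.card + 1) = 0 :=
      aux_sum_pow_card_succ s a (fun j hj => hsq j (by simp [hj])) hc'
    have hIH : (∑ j ∈ s, a j) ^ s.card = s.card.factorial • s.noncommProd a hc' :=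
      ih (fun j hj => hsq j (by simp [hj])) hc'
    rw [Finset.sum_cons, Finset.card_cons, hC.add_pow, Finset.noncommProd_cons]
    rw [Finset.sum_range_succ']
    have hz : ∑ k ∈ Finset.range (s.card + 1),
        a i ^ (k + 1) * (∑ j ∈ s, a j) ^ (s.card + 1 - (k + 1)) * ((s.card+1).choose (k+1) : R)
        = a i * (∑ j ∈ s, a j) ^ s.card * ((s.card + 1) : R) := by
      rw [Finset.sum_eq_single 0]
      · simp
      · intro k hk hk0
        match k with
        | 0 => exact absurd rfl hk0
        | (k+1) =>
          have : a i ^ (k + 2) = 0 := by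
            have h2 : a i ^ 2 = 0 := by rw [sq]; exact hsq i (by simp)
            rw [show k + 2 = 2 + k by omega, pow_add, h2, zero_mul]
          simp [this]
      · simp
    rw [hz, Nat.sub_zero, hS, hIH]
    simp only [pow_zero, one_mul, mul_zero, zero_mul, add_zero]
    rw [Nat.factorial_succ]
    rw [show ((s.card : R) + 1) = (((s.card + 1 : ℕ)) : R) by push_cast; ring]
    rw [← (Nat.cast_commute (s.card + 1) (a i * s.card.factorial • s.noncommProd a hc')).eq]
    rw [mul_smul_comm, ← nsmul_eq_mul, ← mul_smul]

theorem mem_wtSpace_iff {g : Type*} [LieRing g] [LieAlgebra ℂ g]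
    {t : LieSubalgebra ℂ g}
    {E : Type*} [AddCommGroup E] [Module ℂ E] [LieRingModule g E] [LieModule ℂ g E]
    {χ : Module.Dual ℂ t} {v : E} :
    v ∈ wtSpace g t E χ ↔ ∀ H : t, ⁅(H : g), v⁆ = χ H • v := by
  simp only [wtSpace, Submodule.mem_iInf, Module.End.mem_eigenspace_iff,
    LieModule.toEnd_apply_apply]

theorem wt_shift {g : Type*} [LieRing g] [LieAlgebra ℂ g]
    {t : LieSubalgebra ℂ g}
    {E : Type*} [AddCommGroup E] [Module ℂ E] [LieRingModule g E] [LieModule ℂ g E]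
    {β χ : Module.Dual ℂ t} {x : g} {v : E}
    (hx : x ∈ wtSpace g t g β) (hv : v ∈ wtSpace g t E χ) :
    ⁅x, v⁆ ∈ wtSpace g t E (β + χ) := by
  rw [mem_wtSpace_iff] at hx hv ⊢
  intro H
  rw [leibniz_lie, hx H, hv H, smul_lie, lie_smul]
  simp [add_smul]

attribute [local instance 100] LieRing.ofAssociativeRing

theorem stmt5 (g : Type*) [LieRing g] [LieAlgebra ℂ g] [FiniteDimensional ℂ g]
    [LieAlgebra.IsSemisimple ℂ g]
    (t : LieSubalgebra ℂ g) [LieSubalgebra.IsCartanSubalgebra t]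
    (E : Type*) [AddCommGroup E] [Module ℂ E] [LieRingModule g E] [LieModule ℂ g E]
    [FiniteDimensional ℂ E]
    (hdec : (⨆ χ : Module.Dual ℂ t, wtSpace g t E χ) = ⊤)
    (r : ℕ) (α : Fin r → Module.Dual ℂ t) (e y : Fin r → g) (h : Fin r → t)
    (ϖ : Module.Dual ℂ t)
    (hy : ∀ i, y i ∈ wtSpace g t g (-(α i))) (hy0 : ∀ i, y i ≠ 0)
    (he : ∀ i, e i ∈ wtSpace g t g (α i))
    (htriple : ∀ i, ⁅e i, y i⁆ = (h i : g))
    (hα2 : ∀ i, (α i) (h i) = 2)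
    (horth : ∀ i j, i ≠ j → (α j) (h i) = 0)
    (hstrong : ∀ i j, i ≠ j → wtSpace g t g (α i + α j) = ⊥ ∧
      wtSpace g t g (-(α i) - α j) = ⊥ ∧ wtSpace g t g (α i - α j) = ⊥)
    (hbound : ∀ χ : Module.Dual ℂ t, wtSpace g t E χ ≠ ⊥ →
      ∀ i, ‖χ (h i)‖ ≤ 1)
    (hϖ1 : ∀ i, ϖ (h i) = 1)
    (hϖ0 : wtSpace g t E ϖ ≠ ⊥) :
    ((∑ i, LieModule.toEnd ℂ g E (y i)) ^ (r + 1) = 0) ∧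
    Submodule.map ((∑ i, LieModule.toEnd ℂ g E (y i)) ^ r) (wtSpace g t E ϖ)
      = wtSpace g t E (ϖ - ∑ i, α i) ∧
    wtSpace g t E (ϖ - ∑ i, α i) ≠ ⊥ := by
  set φ := LieModule.toEnd ℂ g E with hφdef
  -- weight spaces with |χ (h i)| > 1 vanish
  have hbot : ∀ (χ : Module.Dual ℂ t) (i : Fin r),
      1 < ‖χ (h i)‖ → wtSpace g t E χ = ⊥ := by
    intro χ i hgt
    by_contra hne
    exact absurd (hbound χ hne i) (not_le.2 hgt)
  have hmem0 : ∀ {χ : Module.Dual ℂ t} {v : E},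
      v ∈ wtSpace g t E χ → wtSpace g t E χ = ⊥ → v = 0 := by
    intro χ v hv hb
    rw [hb] at hv
    exact hv
  have hmem0g : ∀ {χ : Module.Dual ℂ t} {x : g},
      x ∈ wtSpace g t g χ → wtSpace g t g χ = ⊥ → x = 0 := by
    intro χ x hx hb
    rw [hb] at hx
    exact hx
  -- brackets between root vectors vanish
  have hyyg : ∀ i j, i ≠ j → ⁅y i, y j⁆ = 0 := by
    intro i j hij
    refine hmem0g (wt_shift (hy i) (hy j)) ?_
    have := (hstrong i j hij).2.1
    rwa [show -(α i) - α j = -(α i) + -(α j) by abel] at this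
  have heyg : ∀ i j, i ≠ j → ⁅e i, y j⁆ = 0 := by
    intro i j hij
    refine hmem0g (wt_shift (he i) (hy j)) ?_
    have := (hstrong i j hij).2.2
    rwa [show α i - α j = α i + -(α j) by abel] at this
  have heeg : ∀ i j, i ≠ j → ⁅e i, e j⁆ = 0 := by
    intro i j hij
    exact hmem0g (wt_shift (he i) (he j)) (hstrong i j hij).1
  have hbr_comm : ∀ {a b : g}, ⁅a, b⁆ = 0 → Commute (φ a) (φ b) := by
    intro a b hab
    have : ⁅φ a, φ b⁆ = 0 := by
      rw [← LieHom.map_lie φ a b, hab]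
      exact map_zero φ
    rw [Ring.lie_def] at this
    exact sub_eq_zero.mp this
  have hcyy : ∀ i j, i ≠ j → Commute (φ (y i)) (φ (y j)) :=
    fun i j hij => hbr_comm (hyyg i j hij)
  have hcey : ∀ i j, i ≠ j → Commute (φ (e i)) (φ (y j)) :=
    fun i j hij => hbr_comm (heyg i j hij)
  have hcee : ∀ i j, i ≠ j → Commute (φ (e i)) (φ (e j)) :=
    fun i j hij => hbr_comm (heeg i j hij)
  -- φ(y i)² = 0
  have habs : ∀ (c : ℂ), ‖c‖ ≤ 1 → 1 < ‖(-2 + (-2 + c))‖ := by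
    intro c hc
    have h4 : ‖(4 : ℂ)‖ = 4 := by norm_num
    have : ‖(4 : ℂ)‖ ≤ ‖((4 : ℂ) - c)‖ + ‖c‖ := by
      calc ‖(4 : ℂ)‖ = ‖(((4:ℂ) - c) + c)‖ := by ring_nf
        _ ≤ ‖((4:ℂ) - c)‖ + ‖c‖ := norm_add_le _ _
    have heq : (-2 : ℂ) + (-2 + c) = -((4:ℂ) - c) := by ring
    rw [heq, norm_neg]
    linarith [this, h4]
  have hsq : ∀ i, φ (y i) * φ (y i) = 0 := by
    intro i
    apply LinearMap.ext
    intro v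
    have hv : v ∈ (⊤ : Submodule ℂ E) := Submodule.mem_top
    rw [← hdec] at hv
    simp only [Module.End.mul_apply, LinearMap.zero_apply]
    refine Submodule.iSup_induction (motive := fun w => φ (y i) (φ (y i) w) = 0) _ hv ?_ ?_ ?_
    · intro χ v hv
      by_cases hb : wtSpace g t E χ = ⊥
      · rw [hmem0 hv hb, map_zero, map_zero]
      · have h1 := hbound χ hb i
        have m1 : φ (y i) v = ⁅y i, v⁆ := LieModule.toEnd_apply_apply ℂ g E (y i) v
        have m2 : ⁅y i, v⁆ ∈ wtSpace g t E (-(α i) + χ) := wt_shift (hy i) hv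
        have m3 : ⁅y i, ⁅y i, v⁆⁆ ∈ wtSpace g t E (-(α i) + (-(α i) + χ)) :=
          wt_shift (hy i) m2
        have hb2 : wtSpace g t E (-(α i) + (-(α i) + χ)) = ⊥ := by
          apply hbot _ i
          simp only [LinearMap.add_apply, LinearMap.neg_apply, hα2 i]
          exact habs _ h1
        rw [m1, LieModule.toEnd_apply_apply]
        exact hmem0 m3 hb2
    · show φ (y i) (φ (y i) 0) = 0
      rw [map_zero, map_zero]
    · intro a b ha hb
      show φ (y i) (φ (y i) (a + b)) = 0
      rw [map_add, map_add]
      rw [show φ (y i) (φ (y i) a) = 0 from ha, show φ (y i) (φ (y i) b) = 0 from hb, add_zero]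
  -- products of root operators shift weights
  have hprod : ∀ (s : Finset (Fin r)) (x : Fin r → g) (β : Fin r → Module.Dual ℂ t),
      (∀ i, x i ∈ wtSpace g t g (β i)) →
      ∀ (comm : (s : Set (Fin r)).Pairwise (Function.onFun Commute (fun i => φ (x i))))
        (χ : Module.Dual ℂ t) (v : E), v ∈ wtSpace g t E χ →
      (s.noncommProd (fun i => φ (x i)) comm) v ∈ wtSpace g t E ((∑ i ∈ s, β i) + χ) := by
    intro s x β hx
    induction s using Finset.cons_induction with
    | empty => intro comm χ v hv; simpa using hv
    | cons i s his ih =>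
      intro comm χ v hv
      rw [Finset.noncommProd_cons, Module.End.mul_apply, Finset.sum_cons, add_assoc]
      have := ih (comm.mono (fun z hz => by simp only [Finset.coe_cons, Set.mem_insert_iff]; exact Or.inr hz)) χ v hv
      exact wt_shift (hx i) this
  -- cancellation: prod y ∘ prod e = id on weight spaces with χ(h j) = -1
  have key : ∀ (i : Fin r) (a b : g) (ca cb : Module.Dual ℂ t) (cc : ℂ),
      a ∈ wtSpace g t g ca → b ∈ wtSpace g t g cb → ⁅a, b⁆ = cc • (h i : g) →
      ∀ (χ : Module.Dual ℂ t) (v : E), v ∈ wtSpace g t E χ →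
      wtSpace g t E (ca + χ) = ⊥ → φ a (φ b v) = (cc * χ (h i)) • v := by
    intro i a b ca cb cc ha hb hab χ v hv hzero
    have h1 : φ a v = 0 := by
      rw [LieModule.toEnd_apply_apply]
      exact hmem0 (wt_shift ha hv) hzero
    have h2 : φ a * φ b = φ b * φ a + φ ⁅a, b⁆ := by
      rw [LieHom.map_lie φ a b, Ring.lie_def]
      abel
    have h3 : φ ⁅a, b⁆ v = (cc * χ (h i)) • v := by
      rw [hab, map_smul, LinearMap.smul_apply, LieModule.toEnd_apply_apply]
      rw [mem_wtSpace_iff] at hv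
      rw [hv (h i), smul_smul]
    calc φ a (φ b v) = (φ a * φ b) v := rfl
      _ = (φ b * φ a + φ ⁅a, b⁆) v := by rw [h2]
      _ = φ b (φ a v) + φ ⁅a, b⁆ v := rfl
      _ = (cc * χ (h i)) • v := by rw [h1, map_zero, zero_add, h3]
  have hYE : ∀ (s : Finset (Fin r)),
      ∀ (cy : (s : Set (Fin r)).Pairwise (Function.onFun Commute (fun i => φ (y i))))
        (ce : (s : Set (Fin r)).Pairwise (Function.onFun Commute (fun i => φ (e i))))
        (χ : Module.Dual ℂ t), (∀ j ∈ s, χ (h j) = -1) →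
        ∀ v ∈ wtSpace g t E χ,
        (s.noncommProd (fun i => φ (y i)) cy)
          ((s.noncommProd (fun i => φ (e i)) ce) v) = v := by
    intro s
    induction s using Finset.cons_induction with
    | empty => intro _ _ _ _ v _; simp
    | cons i s his ih =>
      intro cy ce χ hχ v hv
      have cy' : ((s : Set (Fin r))).Pairwise (Function.onFun Commute (fun j => φ (y j))) :=
        cy.mono (fun z hz => by simp only [Finset.coe_cons, Set.mem_insert_iff]; exact Or.inr hz)
      have ce' : ((s : Set (Fin r))).Pairwise (Function.onFun Commute (fun j => φ (e j))) :=
        ce.mono (fun z hz => by simp only [Finset.coe_cons, Set.mem_insert_iff]; exact Or.inr hz)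
      rw [Finset.noncommProd_cons, Finset.noncommProd_cons, Module.End.mul_apply,
        Module.End.mul_apply]
      have hcom : Commute (φ (e i)) (s.noncommProd (fun j => φ (y j)) cy') :=
        Finset.noncommProd_commute _ _ _ _
          (fun j hj => hcey i j (by rintro rfl; exact his hj))
      have step1 : (s.noncommProd (fun j => φ (y j)) cy')
          (φ (e i) ((s.noncommProd (fun j => φ (e j)) ce') v))
          = φ (e i) ((s.noncommProd (fun j => φ (y j)) cy')
            ((s.noncommProd (fun j => φ (e j)) ce') v)) :=
        LinearMap.congr_fun hcom.symm.eq _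
      rw [step1, ih cy' ce' χ (fun j hj => hχ j (Finset.mem_cons_of_mem hj)) v hv]
      -- now φ (y i) (φ (e i) v) = v
      have hbr : ⁅y i, e i⁆ = (-1 : ℂ) • (h i : g) := by
        rw [← lie_skew, htriple i]; simp
      have hz : wtSpace g t E (-(α i) + χ) = ⊥ := by
        apply hbot _ i
        simp only [LinearMap.add_apply, LinearMap.neg_apply, hα2 i,
          hχ i (Finset.mem_cons_self i s)]
        norm_num
      have := key i (y i) (e i) (-(α i)) (α i) (-1) (hy i) (he i) hbr χ v hv hz
      rw [this, hχ i (Finset.mem_cons_self i s)]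
      norm_num
  have hEY : ∀ (s : Finset (Fin r)),
      ∀ (ce : (s : Set (Fin r)).Pairwise (Function.onFun Commute (fun i => φ (e i))))
        (cy : (s : Set (Fin r)).Pairwise (Function.onFun Commute (fun i => φ (y i))))
        (χ : Module.Dual ℂ t), (∀ j ∈ s, χ (h j) = 1) →
        ∀ v ∈ wtSpace g t E χ,
        (s.noncommProd (fun i => φ (e i)) ce)
          ((s.noncommProd (fun i => φ (y i)) cy) v) = v := by
    intro s
    induction s using Finset.cons_induction with
    | empty => intro _ _ _ _ v _; simp
    | cons i s his ih =>
      intro ce cy χ hχ v hv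
      have cy' : ((s : Set (Fin r))).Pairwise (Function.onFun Commute (fun j => φ (y j))) :=
        cy.mono (fun z hz => by simp only [Finset.coe_cons, Set.mem_insert_iff]; exact Or.inr hz)
      have ce' : ((s : Set (Fin r))).Pairwise (Function.onFun Commute (fun j => φ (e j))) :=
        ce.mono (fun z hz => by simp only [Finset.coe_cons, Set.mem_insert_iff]; exact Or.inr hz)
      rw [Finset.noncommProd_cons, Finset.noncommProd_cons, Module.End.mul_apply,
        Module.End.mul_apply]
      have hcom : Commute (φ (y i)) (s.noncommProd (fun j => φ (e j)) ce') := by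
        apply Finset.noncommProd_commute
        intro j hj
        exact (hcey j i (by rintro rfl; exact his hj)).symm
      have step1 : (s.noncommProd (fun j => φ (e j)) ce')
          (φ (y i) ((s.noncommProd (fun j => φ (y j)) cy') v))
          = φ (y i) ((s.noncommProd (fun j => φ (e j)) ce')
            ((s.noncommProd (fun j => φ (y j)) cy') v)) :=
        LinearMap.congr_fun hcom.symm.eq _
      rw [step1, ih ce' cy' χ (fun j hj => hχ j (Finset.mem_cons_of_mem hj)) v hv]
      have hz : wtSpace g t E (α i + χ) = ⊥ := by
        apply hbot _ i
        simp only [LinearMap.add_apply, hα2 i, hχ i (Finset.mem_cons_self i s)]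
        norm_num
      have := key i (e i) (y i) (α i) (-(α i)) 1 (he i) (hy i)
        (by rw [htriple i, one_smul]) χ v hv hz
      rw [this, hχ i (Finset.mem_cons_self i s)]
      norm_num
  -- global commutation data
  have hQcomm : ((Finset.univ : Finset (Fin r)) : Set (Fin r)).Pairwise
      (Function.onFun Commute (fun i => φ (y i))) :=
    fun i _ j _ hij => hcyy i j hij
  have hQecomm : ((Finset.univ : Finset (Fin r)) : Set (Fin r)).Pairwise
      (Function.onFun Commute (fun i => φ (e i))) :=
    fun i _ j _ hij => hcee i j hij
  set Q := Finset.univ.noncommProd (fun i => φ (y i)) hQcomm with hQdef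
  set Qe := Finset.univ.noncommProd (fun i => φ (e i)) hQecomm with hQedef
  have hsum_neg : (∑ i, -(α i)) + ϖ = ϖ - ∑ i, α i := by
    rw [Finset.sum_neg_distrib]; abel
  have hwt_target : ∀ j, (ϖ - ∑ i, α i) (h j) = -1 := by
    intro j
    have hsum : (∑ i, α i) (h j) = 2 := by
      rw [LinearMap.sum_apply]
      rw [Finset.sum_eq_single j (fun i _ hij => horth j i (fun hc => hij hc.symm))
        (fun hj => absurd (Finset.mem_univ j) hj)]
      exact hα2 j
    rw [LinearMap.sub_apply, hsum, hϖ1 j]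
    norm_num
  have hϖval : ∀ j, ϖ (h j) = 1 := hϖ1
  -- the power of the sum
  have hpow1 : (∑ i, φ (y i)) ^ (r + 1) = 0 := by
    have := aux_sum_pow_card_succ Finset.univ (fun i => φ (y i))
      (fun i _ => hsq i) hQcomm
    simpa using this
  have hpowr : (∑ i, φ (y i)) ^ r = r.factorial • Q := by
    have := aux_sum_pow_card Finset.univ (fun i => φ (y i))
      (fun i _ => hsq i) hQcomm
    simpa [hQdef] using this
  have hmapsmul : ∀ (n : ℕ), n ≠ 0 → ∀ (f : Module.End ℂ E) (p : Submodule ℂ E),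
      Submodule.map (n • f) p = Submodule.map f p := by
    intro n hn f p
    apply le_antisymm
    · rintro x ⟨v, hv, rfl⟩
      refine ⟨(n : ℂ) • v, p.smul_mem _ hv, ?_⟩
      rw [map_smul, Nat.cast_smul_eq_nsmul, LinearMap.smul_apply]
    · rintro x ⟨v, hv, rfl⟩
      refine ⟨((n : ℂ)⁻¹) • v, p.smul_mem _ hv, ?_⟩
      rw [LinearMap.smul_apply, map_smul, ← Nat.cast_smul_eq_nsmul ℂ n, smul_smul,
        mul_inv_cancel₀ (Nat.cast_ne_zero.mpr hn), one_smul]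
  -- Q maps E_ϖ into the target weight space
  have hQwt : ∀ v ∈ wtSpace g t E ϖ, Q v ∈ wtSpace g t E (ϖ - ∑ i, α i) := by
    intro v hv
    have := hprod Finset.univ y (fun i => -(α i)) hy hQcomm ϖ v hv
    rwa [hsum_neg] at this
  have hQewt : ∀ w ∈ wtSpace g t E (ϖ - ∑ i, α i), Qe w ∈ wtSpace g t E ϖ := by
    intro w hw
    have := hprod Finset.univ e α he hQecomm _ w hw
    rwa [show (∑ i, α i) + (ϖ - ∑ i, α i) = ϖ by abel] at this
  have hQQe : ∀ w ∈ wtSpace g t E (ϖ - ∑ i, α i), Q (Qe w) = w := by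
    intro w hw
    exact hYE Finset.univ hQcomm hQecomm _ (fun j _ => hwt_target j) w hw
  have hQeQ : ∀ v ∈ wtSpace g t E ϖ, Qe (Q v) = v := by
    intro v hv
    exact hEY Finset.univ hQecomm hQcomm ϖ (fun j _ => hϖ1 j) v hv
  refine ⟨by simpa using hpow1, ?_, ?_⟩
  · -- the image statement
    have : (∑ i, LieModule.toEnd ℂ g E (y i)) = ∑ i, φ (y i) := rfl
    rw [this, hpowr, hmapsmul r.factorial (Nat.factorial_ne_zero r)]
    apply le_antisymm
    · rintro x ⟨v, hv, rfl⟩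
      exact hQwt v hv
    · intro w hw
      exact ⟨Qe w, hQewt w hw, hQQe w hw⟩
  · obtain ⟨v, hv, hv0⟩ := (Submodule.ne_bot_iff _).mp hϖ0
    refine (Submodule.ne_bot_iff _).mpr ⟨Q v, hQwt v hv, ?_⟩
    intro hQv
    apply hv0
    rw [← hQeQ v hv, hQv, map_zero]
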